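/- Let 0 ≤ t ≤ f ≤ n, let F and F' be flags of size f with t labeled vertices, and fix an injective map Θ₀: {1,…,t} → {1,…,n}. Then the full symmetrization of the product d_F^{Θ₀}·d_{F'}^{Θ₀} equals the average of d_F^Θ·d_{F'}^Θ over all injective labelings: (1/n!) Σ_{σ ∈ S_n} σ·( d_F^{Θ₀} · d_{F'}^{Θ₀} ) = ((n−t)!/n!) Σ_{Θ ∈ Inj([t],[n])} d_F^Θ · d_{F'}^Θ, where Inj([t],[n]) is the set of injective maps {1,…,t} → {1,…,n}. -/

import Mathlib

open MvPolynomial Finset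
open scoped Classical

noncomputable section

abbrev PolyRing (n : ℕ) := MvPolynomial (Sym2 (Fin n)) ℝ

def xe {n : ℕ} (i j : Fin n) : PolyRing n := X s(i, j)

def permAct {n : ℕ} (σ : Equiv.Perm (Fin n)) : PolyRing n →ₐ[ℝ] PolyRing n :=
  MvPolynomial.rename (Sym2.map σ)

def injOn (t f n : ℕ) (htf : t ≤ f) (Θ : Fin t → Fin n) : Finset (Fin f → Fin n) :=
  Finset.univ.filter fun h => Function.Injective h ∧ ∀ i : Fin t, h (Fin.castLE htf i) = Θ i

def edgePairs {f : ℕ} (F : SimpleGraph (Fin f)) : Finset (Fin f × Fin f) :=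
  Finset.univ.filter fun p => p.1 < p.2 ∧ F.Adj p.1 p.2

def nonEdgePairs {f : ℕ} (F : SimpleGraph (Fin f)) : Finset (Fin f × Fin f) :=
  Finset.univ.filter fun p => p.1 < p.2 ∧ ¬ F.Adj p.1 p.2

def dF {t f n : ℕ} (htf : t ≤ f) (F : SimpleGraph (Fin f)) (Θ : Fin t → Fin n) : PolyRing n :=
  ∑ h ∈ injOn t f n htf Θ,
    (∏ p ∈ edgePairs F, xe (h p.1) (h p.2)) *
    (∏ p ∈ nonEdgePairs F, (1 - xe (h p.1) (h p.2)))

lemma permAct_xe {n : ℕ} (σ : Equiv.Perm (Fin n)) (i j : Fin n) :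
    permAct σ (xe i j) = xe (σ i) (σ j) := by
  simp [permAct, xe]

lemma permAct_dF {t f n : ℕ} (htf : t ≤ f) (F : SimpleGraph (Fin f))
    (σ : Equiv.Perm (Fin n)) (Θ : Fin t → Fin n) :
    permAct σ (dF htf F Θ) = dF htf F (σ ∘ Θ) := by
  unfold dF
  rw [map_sum]
  refine Finset.sum_nbij' (i := fun h => σ ∘ h) (j := fun h => σ.symm ∘ h) ?_ ?_ ?_ ?_ ?_
  · intro h hh
    simp only [injOn, mem_filter, mem_univ, true_and] at hh ⊢
    exact ⟨σ.injective.comp hh.1, fun i => by simp [hh.2 i]⟩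
  · intro h hh
    simp only [injOn, mem_filter, mem_univ, true_and] at hh ⊢
    refine ⟨σ.symm.injective.comp hh.1, fun i => by rw [Function.comp_apply, hh.2 i]; simp⟩
  · intro h _; funext x; simp
  · intro h _; funext x; simp
  · intro h _
    rw [map_mul, map_prod, map_prod]
    simp only [map_sub, map_one, permAct_xe]
    rfl

lemma exists_extend {n t : ℕ} {Θ₀ Θ : Fin t → Fin n}
    (h₀ : Function.Injective Θ₀) (h : Function.Injective Θ) :
    ∃ τ : Equiv.Perm (Fin n), τ ∘ Θ₀ = Θ := by
  have e0 : Fintype.card (Set.range Θ₀) = t := by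
    rw [Set.card_range_of_injective h₀, Fintype.card_fin]
  have e1 : Fintype.card (Set.range Θ) = t := by
    rw [Set.card_range_of_injective h, Fintype.card_fin]
  have hc : Fintype.card {x : Fin n // x ∉ Set.range Θ₀}
      = Fintype.card {x : Fin n // x ∉ Set.range Θ} := by
    rw [Fintype.card_subtype_compl, Fintype.card_subtype_compl]
    congr 1
    · exact e0.trans e1.symm
  let ecompl := Fintype.equivOfCardEq hc
  let erange : (Set.range Θ₀) ≃ (Set.range Θ) :=
    (Equiv.ofInjective Θ₀ h₀).symm.trans (Equiv.ofInjective Θ h)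
  refine ⟨((Equiv.sumCompl (· ∈ Set.range Θ₀)).symm.trans
    ((erange.sumCongr ecompl).trans (Equiv.sumCompl (· ∈ Set.range Θ)))), ?_⟩
  funext i
  have hmem : Θ₀ i ∈ Set.range Θ₀ := Set.mem_range_self i
  simp only [Function.comp_apply, Equiv.trans_apply,
    Equiv.sumCompl_symm_apply_of_pos hmem, Equiv.sumCongr_apply, Sum.map_inl,
    Equiv.sumCompl_apply_inl]
  have h1 : (⟨Θ₀ i, hmem⟩ : {x // x ∈ Set.range Θ₀}) = Equiv.ofInjective Θ₀ h₀ i := rfl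
  rw [h1]
  simp only [erange, Equiv.trans_apply, Equiv.symm_apply_apply]
  rfl

lemma fiber_card {n t : ℕ} {Θ₀ Θ : Fin t → Fin n}
    (h₀ : Function.Injective Θ₀) (h : Function.Injective Θ) :
    (Finset.univ.filter fun σ : Equiv.Perm (Fin n) => ⇑σ ∘ Θ₀ = Θ).card
      = (n - t).factorial := by
  obtain ⟨τ, hτ⟩ := exists_extend h₀ h
  -- biject fiber over Θ with fiber over Θ₀
  have hbij : (Finset.univ.filter fun σ : Equiv.Perm (Fin n) => ⇑σ ∘ Θ₀ = Θ).card
      = (Finset.univ.filter fun σ : Equiv.Perm (Fin n) => ⇑σ ∘ Θ₀ = Θ₀).card := by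
    refine Finset.card_nbij' (i := fun σ => τ⁻¹ * σ) (j := fun σ => τ * σ) ?_ ?_ ?_ ?_
    · intro σ hσ
      simp only [mem_coe, mem_filter, mem_univ, true_and] at hσ ⊢
      funext i
      have := congrFun hσ i
      simp only [Function.comp_apply, Equiv.Perm.mul_apply] at this ⊢
      rw [this, ← hτ]
      simp
    · intro σ hσ
      simp only [mem_coe, mem_filter, mem_univ, true_and] at hσ ⊢
      funext i
      have := congrFun hσ i
      simp only [Function.comp_apply, Equiv.Perm.mul_apply] at this ⊢
      rw [this]
      exact congrFun hτ i
    · intro σ _; simp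
    · intro σ _; simp
  rw [hbij]
  have hstab : (Finset.univ.filter fun σ : Equiv.Perm (Fin n) => ⇑σ ∘ Θ₀ = Θ₀).card
      = Fintype.card {σ : Equiv.Perm (Fin n) // ∀ a, ¬ (a ∉ Set.range Θ₀) → σ a = a} := by
    rw [Fintype.card_subtype]
    congr 1
    ext σ
    simp only [mem_filter, mem_univ, true_and]
    constructor
    · intro hσ a ha
      rw [not_not] at ha
      obtain ⟨i, rfl⟩ := ha
      exact congrFun hσ i
    · intro hσ
      funext i
      exact hσ (Θ₀ i) (not_not_intro (Set.mem_range_self i))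
  have h1 : Fintype.card {a : Fin n // a ∈ Set.range Θ₀} = t := by
    have h2 := Set.card_range_of_injective h₀
    rw [Fintype.card_fin] at h2
    exact (Fintype.card_congr (Equiv.subtypeEquivRight (fun x => Iff.rfl))).trans h2
  have hcompl : Fintype.card {a : Fin n // a ∉ Set.range Θ₀} = n - t := by
    rw [Fintype.card_subtype_compl, Fintype.card_fin, h1]
  rw [hstab, ← Fintype.card_congr (Equiv.Perm.subtypeEquivSubtypePerm
    (fun a : Fin n => a ∉ Set.range Θ₀)), Fintype.card_perm, hcompl]

theorem stmt3 (n t f : ℕ) (htf : t ≤ f) (hfn : f ≤ n)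
    (F F' : SimpleGraph (Fin f))
    (Θ₀ : Fin t → Fin n) (hΘ₀ : Function.Injective Θ₀) :
    ((n.factorial : ℝ))⁻¹ •
        ∑ σ : Equiv.Perm (Fin n), permAct σ (dF htf F Θ₀ * dF htf F' Θ₀) =
      (((n - t).factorial : ℝ) / (n.factorial : ℝ)) •
        ∑ Θ ∈ Finset.univ.filter (fun Θ : Fin t → Fin n => Function.Injective Θ),
          dF htf F Θ * dF htf F' Θ := by
  have key : ∀ σ : Equiv.Perm (Fin n),
      permAct σ (dF htf F Θ₀ * dF htf F' Θ₀)
        = (fun Θ => dF htf F Θ * dF htf F' Θ) (⇑σ ∘ Θ₀) := by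
    intro σ
    rw [map_mul, permAct_dF, permAct_dF]
  simp only [key]
  rw [Finset.sum_comp (fun Θ => dF htf F Θ * dF htf F' Θ) (fun σ : Equiv.Perm (Fin n) => ⇑σ ∘ Θ₀)]
  have himg : (Finset.univ.image fun σ : Equiv.Perm (Fin n) => ⇑σ ∘ Θ₀)
      = Finset.univ.filter fun Θ : Fin t → Fin n => Function.Injective Θ := by
    ext Θ
    simp only [mem_image, mem_filter, mem_univ, true_and]
    constructor
    · rintro ⟨σ, -, rfl⟩
      exact σ.injective.comp hΘ₀
    · intro hΘ
      obtain ⟨τ, hτ⟩ := exists_extend hΘ₀ hΘ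
      exact ⟨τ, hτ⟩
  rw [himg]
  rw [Finset.sum_congr rfl (fun Θ hΘ => by
    rw [fiber_card hΘ₀ (Finset.mem_filter.mp hΘ).2,
      ← Nat.cast_smul_eq_nsmul ℝ])]
  rw [← Finset.smul_sum, smul_smul]
  congr 1
  rw [div_eq_inv_mul]

end
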